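/- For positive integers n, d, k with d ≥ n and k ≤ n, the polynomial ∑_{j=0}^{k} (-1)^j C(k,j) ∏_{i=0}^{n-1} ((d−n+i)t + n − j − i) equals ∑_{w ∈ W_{n,d,k}} t^{unlucky(w)}, where W_{n,d,k} is the set of words w ∈ [d]^n containing each of 1,…,k at least once, and unlucky(w) counts cars not parking in their preferred space under the protocol in which n cars park in order on spaces 1,…,n, car C_i parks in space w_i if w_i ≤ n and space w_i is free, and otherwise parks in the largest free space. In particular this polynomial has nonnegative coefficients. -/

import Mathlib

open Finset Polynomial

/-- One step of the parking protocol on spaces `1,…,n`: the state is the pair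
(set of occupied spaces, number of unlucky cars so far) and `p` is the preferred
space of the next car.  The car parks at `p` if `p ∈ {1,…,n}` is free, and
otherwise parks at the largest free space (and is unlucky). -/
def parkStep (n : ℕ) (s : Finset ℕ × ℕ) (p : ℕ) : Finset ℕ × ℕ :=
  if p ∈ Finset.Icc 1 n ∧ p ∉ s.1 then (insert p s.1, s.2)
  else (insert (WithBot.unbotD 0 ((Finset.Icc 1 n) \ s.1).max) s.1, s.2 + 1)

/-- The number of unlucky cars when the cars park (in order) with the list `l`
of preferences, on the street with spaces `1,…,n`. -/
def unlucky (n : ℕ) (l : List ℕ) : ℕ := (l.foldl (parkStep n) (∅, 0)).2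


namespace Stmt16

def bmap (π m v : ℕ) : ℕ :=
  if v < π then v else if v = π then m + 1 else if v ≤ m + 1 then v - 1 else v

def bmap' (π m w : ℕ) : ℕ :=
  if w < π then w else if w = m + 1 then π else if w ≤ m then w + 1 else w

lemma bmap'_bmap {π m : ℕ} (hπ2 : π ≤ m + 1) (v : ℕ) : bmap' π m (bmap π m v) = v := by
  unfold bmap bmap'; split_ifs <;> omega

lemma bmap_bmap' {π m : ℕ} (hπ2 : π ≤ m + 1) (w : ℕ) : bmap π m (bmap' π m w) = w := by
  unfold bmap bmap'; split_ifs <;> omega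

lemma bmap_pos {π m : ℕ} (hπ1 : 1 ≤ π) {v : ℕ} (hv : 1 ≤ v) : 1 ≤ bmap π m v := by
  unfold bmap; split_ifs <;> omega

lemma bmap_le {π m d : ℕ} (hd : m + 1 ≤ d) {v : ℕ} (hv : v ≤ d) : bmap π m v ≤ d := by
  unfold bmap; split_ifs <;> omega

def shf (π q : ℕ) : ℕ := if q < π then q else q - 1

lemma shf_mono (π : ℕ) : Monotone (shf π) := by
  intro a b hab; unfold shf; split_ifs <;> omega

def σs (π : ℕ) (s : Finset ℕ) : Finset ℕ := (s.erase π).image (shf π)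

lemma mem_σs {π : ℕ} (hπ1 : 1 ≤ π) {s : Finset ℕ} (x : ℕ) :
    x ∈ σs π s ↔ if x < π then x ∈ s else x + 1 ∈ s := by
  unfold σs shf
  simp only [mem_image, mem_erase]
  constructor
  · rintro ⟨q, ⟨hq1, hq2⟩, heq⟩
    by_cases h : q < π
    · simp only [if_pos h] at heq; subst heq; rw [if_pos h]; exact hq2
    · have hq : π < q := by omega
      have : x = q - 1 := by simp only [if_neg h] at heq; omega
      subst this
      rw [if_neg (by omega)]
      have : q - 1 + 1 = q := by omega
      rw [this]; exact hq2
  · intro h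
    by_cases hx : x < π
    · rw [if_pos hx] at h
      exact ⟨x, ⟨by omega, h⟩, by rw [if_pos hx]⟩
    · rw [if_neg hx] at h
      exact ⟨x + 1, ⟨by omega, h⟩, by rw [if_neg (by omega)]; omega⟩

lemma σs_insert {π a : ℕ} (ha : a ≠ π) (s : Finset ℕ) :
    σs π (insert a s) = insert (shf π a) (σs π s) := by
  unfold σs
  rw [Finset.erase_insert_of_ne ha, Finset.image_insert]

lemma shf_eq_bmap {π m v : ℕ} (hv : v ∈ Finset.Icc 1 (m+1)) (hne : v ≠ π) :
    shf π v = bmap π m v := by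
  simp only [mem_Icc] at hv
  unfold shf bmap; split_ifs <;> omega

/-- condition transfer -/
lemma cond_iff {π m v : ℕ} (hπ1 : 1 ≤ π) (hπ2 : π ≤ m + 1) (hv : 1 ≤ v)
    {s : Finset ℕ} (hπs : π ∈ s) :
    (bmap π m v ∈ Finset.Icc 1 m ∧ bmap π m v ∉ σs π s) ↔
      (v ∈ Finset.Icc 1 (m+1) ∧ v ∉ s) := by
  simp only [mem_Icc]
  rcases lt_trichotomy v π with h | h | h
  · have hb : bmap π m v = v := by unfold bmap; rw [if_pos h]
    rw [hb, mem_σs hπ1, if_pos h]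
    constructor
    · rintro ⟨h1, h2⟩; exact ⟨⟨h1.1, by omega⟩, h2⟩
    · rintro ⟨h1, h2⟩; exact ⟨⟨h1.1, by omega⟩, h2⟩
  · subst h
    have hb : bmap v m v = m + 1 := by unfold bmap; rw [if_neg (by omega), if_pos rfl]
    rw [hb]
    constructor
    · rintro ⟨h1, _⟩; omega
    · rintro ⟨_, h2⟩; exact absurd hπs h2
  · by_cases hm : v ≤ m + 1
    · have hb : bmap π m v = v - 1 := by
        unfold bmap; rw [if_neg (by omega), if_neg (by omega), if_pos hm]
      rw [hb, mem_σs hπ1, if_neg (by omega)]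
      have : v - 1 + 1 = v := by omega
      rw [this]
      constructor
      · rintro ⟨_, h2⟩; exact ⟨⟨by omega, hm⟩, h2⟩
      · rintro ⟨_, h2⟩; exact ⟨⟨by omega, by omega⟩, h2⟩
    · have hb : bmap π m v = v := by
        unfold bmap; rw [if_neg (by omega), if_neg (by omega), if_neg (by omega)]
      rw [hb]
      constructor
      · rintro ⟨h1, _⟩; omega
      · rintro ⟨h1, _⟩; omega

lemma free_image {π m : ℕ} (hπ1 : 1 ≤ π) (hπ2 : π ≤ m + 1) {s : Finset ℕ} (hπs : π ∈ s) :
    Finset.Icc 1 m \ σs π s = (Finset.Icc 1 (m+1) \ s).image (shf π) := by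
  ext x
  simp only [mem_sdiff, mem_Icc, mem_image]
  constructor
  · rintro ⟨⟨hx1, hxm⟩, hxσ⟩
    by_cases h : x < π
    · refine ⟨x, ⟨⟨hx1, by omega⟩, ?_⟩, by unfold shf; rw [if_pos h]⟩
      intro hxs; exact hxσ (by rw [mem_σs hπ1, if_pos h]; exact hxs)
    · refine ⟨x + 1, ⟨⟨by omega, by omega⟩, ?_⟩, by unfold shf; rw [if_neg (by omega)]; omega⟩
      intro hxs; exact hxσ (by rw [mem_σs hπ1, if_neg h]; exact hxs)
  · rintro ⟨q, ⟨⟨hq1, hq2⟩, hqs⟩, rfl⟩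
    have hqπ : q ≠ π := fun h => hqs (h ▸ hπs)
    by_cases h : q < π
    · have : shf π q = q := by unfold shf; rw [if_pos h]
      rw [this]
      refine ⟨⟨hq1, by omega⟩, fun hc => hqs ?_⟩
      rw [mem_σs hπ1, if_pos h] at hc; exact hc
    · have : shf π q = q - 1 := by unfold shf; rw [if_neg h]
      rw [this]
      refine ⟨⟨by omega, by omega⟩, fun hc => hqs ?_⟩
      rw [mem_σs hπ1, if_neg (by omega)] at hc
      have : q - 1 + 1 = q := by omega
      rwa [this] at hc

lemma max_unbot'_image {π : ℕ} (hπ1 : 1 ≤ π) (F : Finset ℕ) :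
    (WithBot.unbotD 0 (F.image (shf π)).max) = shf π (WithBot.unbotD 0 F.max) := by
  rcases F.eq_empty_or_nonempty with rfl | hF
  · simp only [Finset.image_empty, Finset.max_empty, WithBot.unbotD_bot]
    unfold shf; rw [if_pos (by omega)]
  · have hF' : (F.image (shf π)).Nonempty := hF.image _
    rw [← Finset.coe_max' hF, ← Finset.coe_max' hF']
    simp only [WithBot.unbotD_coe]
    exact Finset.max'_image (shf_mono π) F hF'

lemma maxFree_le (n : ℕ) (s : Finset ℕ) : (WithBot.unbotD 0 (Finset.Icc 1 n \ s).max) ≤ n := by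
  rcases h : (Finset.Icc 1 n \ s).max with _ | a
  · exact Nat.zero_le n
  · have := Finset.mem_of_max h
    rw [mem_sdiff, mem_Icc] at this
    exact this.1.2

lemma maxFree_ne {n : ℕ} {s : Finset ℕ} {π : ℕ} (hπ1 : 1 ≤ π) (hπs : π ∈ s) :
    (WithBot.unbotD 0 (Finset.Icc 1 n \ s).max) ≠ π := by
  rcases h : (Finset.Icc 1 n \ s).max with _ | a
  · exact fun he => (by omega : ¬((0:ℕ) = π)) he
  · have := Finset.mem_of_max h
    rw [mem_sdiff] at this
    exact fun he => this.2 ((show a = π from he) ▸ hπs)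

lemma parkStep_comm {m π v : ℕ} (hπ1 : 1 ≤ π) (hπ2 : π ≤ m + 1) (hv : 1 ≤ v)
    (s : Finset ℕ) (c : ℕ) (hπs : π ∈ s) :
    parkStep m (σs π s, c) (bmap π m v) =
      (σs π (parkStep (m+1) (s, c) v).1, (parkStep (m+1) (s, c) v).2) := by
  unfold parkStep
  by_cases hA : v ∈ Finset.Icc 1 (m+1) ∧ v ∉ s
  · rw [if_pos ((cond_iff hπ1 hπ2 hv hπs).mpr hA), if_pos hA]
    have hne : v ≠ π := fun h => hA.2 (h ▸ hπs)
    simp only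
    rw [σs_insert hne, shf_eq_bmap hA.1 hne]
  · rw [if_neg (fun hB => hA ((cond_iff hπ1 hπ2 hv hπs).mp hB)), if_neg hA]
    simp only
    have hM := maxFree_ne (n := m + 1) (s := s) hπ1 hπs
    rw [σs_insert hM, free_image hπ1 hπ2 hπs, max_unbot'_image hπ1]

lemma parkStep_mem {n π : ℕ} {s : Finset ℕ} {c v : ℕ} (hπs : π ∈ s) :
    π ∈ (parkStep n (s, c) v).1 := by
  unfold parkStep; split_ifs <;> simp [hπs]

lemma foldl_comm {m π : ℕ} (hπ1 : 1 ≤ π) (hπ2 : π ≤ m + 1) :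
    ∀ (l : List ℕ), (∀ v ∈ l, 1 ≤ v) → ∀ (s : Finset ℕ) (c : ℕ), π ∈ s →
      List.foldl (parkStep m) (σs π s, c) (l.map (bmap π m)) =
        (σs π (List.foldl (parkStep (m+1)) (s, c) l).1,
          (List.foldl (parkStep (m+1)) (s, c) l).2) := by
  intro l
  induction l with
  | nil => intro _ s c _; simp
  | cons v l ih =>
    intro hl s c hπs
    simp only [List.map_cons, List.foldl_cons]
    rw [parkStep_comm hπ1 hπ2 (hl v (by simp)) s c hπs]
    have h2 := ih (fun x hx => hl x (by simp [hx])) (parkStep (m+1) (s, c) v).1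
      (parkStep (m+1) (s, c) v).2 (parkStep_mem hπs)
    simpa using h2

lemma parkStep_snd (n : ℕ) (s : Finset ℕ) (c v : ℕ) :
    parkStep n (s, c) v = ((parkStep n (s, 0) v).1, c + (parkStep n (s, 0) v).2) := by
  unfold parkStep; split_ifs <;> simp

lemma foldl_snd (n : ℕ) :
    ∀ (l : List ℕ) (s : Finset ℕ) (c : ℕ),
      List.foldl (parkStep n) (s, c) l =
        ((List.foldl (parkStep n) (s, 0) l).1, c + (List.foldl (parkStep n) (s, 0) l).2) := by
  intro l
  induction l with
  | nil => intro s c; simp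
  | cons v l ih =>
    intro s c
    simp only [List.foldl_cons]
    rw [parkStep_snd n s c v, ih _ (c + (parkStep n (s, 0) v).2),
      ih (parkStep n (s, 0) v).1 (parkStep n (s, 0) v).2]
    simp only [Prod.mk.injEq, true_and]
    omega


lemma Icc_max_unbot' (m : ℕ) : (WithBot.unbotD 0 (Finset.Icc 1 (m+1) : Finset ℕ).max) = m + 1 := by
  have hne : (Finset.Icc 1 (m+1) : Finset ℕ).Nonempty := ⟨m+1, by simp⟩
  rw [← Finset.coe_max' hne]
  simp only [WithBot.unbotD_coe]
  refine le_antisymm ?_ ?_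
  · have := Finset.max'_mem _ hne
    rw [mem_Icc] at this; exact this.2
  · exact Finset.le_max' _ _ (by simp)

lemma firstStep (m q : ℕ) (hq : 1 ≤ q) :
    parkStep (m+1) (∅, 0) q = ({min q (m+1)}, if q ≤ m+1 then 0 else 1) := by
  unfold parkStep
  by_cases h : q ≤ m + 1
  · rw [if_pos ⟨by simp [mem_Icc]; omega, by simp⟩, if_pos h]
    simp [min_eq_left h]
  · rw [if_neg (by simp [mem_Icc]; omega), if_neg h]
    simp only [Finset.sdiff_empty, Icc_max_unbot']
    rw [min_eq_right (by omega)]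
    simp

lemma σs_singleton (π : ℕ) : σs π {π} = ∅ := by
  unfold σs
  rw [Finset.erase_singleton, Finset.image_empty]

lemma unlucky_cons (m q : ℕ) (l : List ℕ) (hq : 1 ≤ q) (hl : ∀ v ∈ l, 1 ≤ v) :
    unlucky (m+1) (q :: l) =
      (if q ≤ m+1 then 0 else 1) + unlucky m (l.map (bmap (min q (m+1)) m)) := by
  set π := min q (m+1) with hπdef
  have hπ1 : 1 ≤ π := le_min hq (by omega)
  have hπ2 : π ≤ m + 1 := min_le_right _ _
  unfold unlucky
  rw [List.foldl_cons, firstStep m q hq]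
  rw [← hπdef]
  have h1 := foldl_comm hπ1 hπ2 l hl {π} (if q ≤ m+1 then 0 else 1) (by simp)
  rw [σs_singleton] at h1
  have h2 := foldl_snd m (l.map (bmap π m)) ∅ (if q ≤ m+1 then 0 else 1)
  rw [h2] at h1
  have := congrArg Prod.snd h1
  simp only at this
  omega


noncomputable def L (d m k : ℕ) : ℤ[X] :=
  ∑ j ∈ Finset.range (k + 1),
    (-1) ^ j * C ((k.choose j : ℤ)) *
      ∏ i ∈ Finset.range m, (C ((d : ℤ) - m + i) * X + C ((m : ℤ) - j - i))

noncomputable def Pc (d m k : ℕ) : ℤ[X] :=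
  ∑ w ∈ Finset.univ.filter
      (fun w : Fin m → Fin d => ∀ j : Fin d, (j : ℕ) < k → ∃ i, w i = j),
    X ^ unlucky m (List.ofFn fun i => (w i : ℕ) + 1)

lemma prod_split (d m j : ℕ) :
    ∏ i ∈ Finset.range (m+1), (C ((d : ℤ) - (m+1 : ℕ) + i) * X + C (((m+1 : ℕ) : ℤ) - j - i)) =
      (C ((d : ℤ) - (m+1 : ℕ)) * X + C (((m : ℤ) + 1) - j)) *
        ∏ i ∈ Finset.range m, (C ((d : ℤ) - m + i) * X + C ((m : ℤ) - j - i)) := by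
  rw [Finset.prod_range_succ', mul_comm]
  congr 1
  · have e0 : (d : ℤ) - (m+1 : ℕ) + ((0:ℕ) : ℤ) = (d : ℤ) - (m+1 : ℕ) := by push_cast; ring
    have e0' : (((m+1 : ℕ) : ℤ)) - j - ((0:ℕ) : ℤ) = ((m : ℤ) + 1) - j := by push_cast; ring
    rw [e0, e0']
  · apply Finset.prod_congr rfl
    intro i _
    have e1 : (d : ℤ) - (m+1 : ℕ) + ((i+1 : ℕ) : ℤ) = (d : ℤ) - m + i := by push_cast; ring
    have e2 : (((m+1 : ℕ) : ℤ)) - j - ((i+1 : ℕ) : ℤ) = (m : ℤ) - j - i := by push_cast; ring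
    rw [e1, e2]

lemma L_rec0 (d m : ℕ) :
    L d (m+1) 0 = (C ((d : ℤ) - (m+1 : ℕ)) * X + C ((m : ℤ) + 1)) * L d m 0 := by
  unfold L
  rw [Finset.sum_range_one, Finset.sum_range_one, prod_split]
  have : ((m : ℤ) + 1) - ((0:ℕ) : ℤ) = (m : ℤ) + 1 := by push_cast; ring
  rw [this]
  have : ∀ i : ℕ, (m : ℤ) - ((0:ℕ):ℤ) - i = (m : ℤ) - ((0:ℕ):ℤ) - i := fun _ => rfl
  push_cast
  ring

lemma L_rec (d m k : ℕ) :
    L d (m+1) (k+1) =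
      C ((k : ℤ) + 1) * L d m k +
        (C ((d : ℤ) - (m+1 : ℕ)) * X + C ((m : ℤ) - k)) * L d m (k+1) := by
  have hLk : C ((k : ℤ) + 1) * L d m k =
      C ((k : ℤ) + 1) * ∑ j ∈ Finset.range (k+2),
        (-1) ^ j * C ((k.choose j : ℤ)) *
          ∏ i ∈ Finset.range m, (C ((d : ℤ) - m + i) * X + C ((m : ℤ) - j - i)) := by
    unfold L
    congr 1
    rw [Finset.sum_range_succ (n := k+1), Nat.choose_eq_zero_of_lt (by omega)]
    simp
  rw [hLk]
  unfold L
  rw [Finset.mul_sum, Finset.mul_sum, ← Finset.sum_add_distrib]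
  apply Finset.sum_congr rfl
  intro j hj
  rw [Finset.mem_range] at hj
  rw [prod_split]
  have hsplit : C ((m : ℤ) + 1 - j) = C ((m : ℤ) - k) + C ((k : ℤ) + 1 - j) := by
    rw [← C_add]; congr 1; push_cast; ring
  rw [hsplit]
  have hch : (((k+1).choose j : ℤ)) * ((k : ℤ) + 1 - j) = ((k : ℤ) + 1) * ((k.choose j : ℤ)) := by
    have hn : k.choose j * (k + 1) = (k + 1).choose j * (k + 1 - j) := Nat.choose_mul_succ_eq k j
    have hj' : (j : ℤ) ≤ (k : ℤ) + 1 := by exact_mod_cast Nat.lt_succ_iff.mp (by omega)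
    have : (((k+1).choose j : ℤ)) * (((k + 1 - j : ℕ)) : ℤ) = ((k + 1 : ℤ)) * ((k.choose j : ℤ)) := by
      exact_mod_cast congrArg (Nat.cast : ℕ → ℤ) (hn.symm.trans (Nat.mul_comm _ _))
    rwa [Nat.cast_sub (by omega), Nat.cast_add, Nat.cast_one] at this
  have hC : C (((k+1).choose j : ℤ)) * C ((k : ℤ) + 1 - j) = C ((k : ℤ) + 1) * C ((k.choose j : ℤ)) := by
    rw [← C_mul, ← C_mul, hch]
  linear_combination ((-1 : ℤ[X])^j *
    ∏ i ∈ Finset.range m, (C ((d : ℤ) - m + i) * X + C ((m : ℤ) - j - i))) * hC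

lemma L_zero (d k : ℕ) : L d 0 k = if k = 0 then 1 else 0 := by
  unfold L
  simp only [Finset.range_zero, Finset.prod_empty, mul_one]
  have : ∀ j : ℕ, (-1 : ℤ[X]) ^ j * C ((k.choose j : ℤ)) = C ((-1) ^ j * (k.choose j : ℤ)) := by
    intro j
    rw [C_mul, C_pow]
    simp
  rw [Finset.sum_congr rfl (fun j _ => this j), ← map_sum, Int.alternating_sum_range_choose]
  split_ifs <;> simp

lemma Pc_zero (d k : ℕ) (hd : 0 < d) : Pc d 0 k = if k = 0 then 1 else 0 := by
  unfold Pc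
  rcases Nat.eq_zero_or_pos k with rfl | hk
  · rw [if_pos rfl]
    rw [Finset.filter_true_of_mem (by intro w _; intro j hj; omega)]
    rw [Finset.sum_congr rfl (fun w _ => rfl)]
    have : (Finset.univ : Finset (Fin 0 → Fin d)) = {fun i => i.elim0} := by
      apply Finset.eq_singleton_iff_unique_mem.mpr
      exact ⟨Finset.mem_univ _, fun w _ => funext fun i => i.elim0⟩
    rw [this, Finset.sum_singleton]
    rw [List.ofFn_zero]
    unfold unlucky
    simp
  · rw [if_neg (by omega)]
    rw [Finset.filter_false_of_mem, Finset.sum_empty]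
    intro w _
    intro h
    obtain ⟨i, _⟩ := h ⟨0, hd⟩ (by simpa using hk)
    exact i.elim0

lemma Pc_big (d m k : ℕ) (hm : m < k) (hkd : k ≤ d) : Pc d m k = 0 := by
  unfold Pc
  rw [Finset.filter_false_of_mem, Finset.sum_empty]
  intro w _ hw
  have hd0 : 0 < d := by omega
  have hk0 : ((⟨0, hd0⟩ : Fin d) : ℕ) < k := by simp; omega
  obtain ⟨i₀, -⟩ := hw ⟨0, hd0⟩ hk0
  have h1 : k ≤ (Finset.univ.filter (fun j : Fin d => (j : ℕ) < k)).card := by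
    have := Finset.card_le_card_of_injOn (f := Fin.castLE hkd)
      (s := (Finset.univ : Finset (Fin k)))
      (t := Finset.univ.filter (fun j : Fin d => (j : ℕ) < k))
      (by intro a _; simp)
      (by intro a _ b _ hab; exact Fin.castLE_injective hkd hab)
    simpa using this
  have h2 : (Finset.univ.filter (fun j : Fin d => (j : ℕ) < k)).card ≤ m := by
    have := Finset.card_le_card_of_injOn
      (f := fun j : Fin d => if h : (j : ℕ) < k then (hw j h).choose else i₀)
      (s := Finset.univ.filter (fun j : Fin d => (j : ℕ) < k))
      (t := (Finset.univ : Finset (Fin m)))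
      (by intro a _; simp)
      (by
        intro a ha b hb hab
        rw [Finset.mem_coe, Finset.mem_filter] at ha hb
        simp only at hab
        rw [dif_pos ha.2, dif_pos hb.2] at hab
        have h1 := (hw a ha.2).choose_spec
        have h2 := (hw b hb.2).choose_spec
        rw [← h1, ← h2, hab])
    simpa using this
  omega


lemma bmap'_pos {π m : ℕ} (hπ1 : 1 ≤ π) {w : ℕ} (hw : 1 ≤ w) : 1 ≤ bmap' π m w := by
  unfold bmap'; split_ifs <;> omega

lemma bmap'_le {π m d : ℕ} (hπ2 : π ≤ m + 1) (hd : m + 1 ≤ d) {w : ℕ} (hw : w ≤ d) :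
    bmap' π m w ≤ d := by
  unfold bmap'; split_ifs <;> omega

def eβ (d m π : ℕ) (hπ1 : 1 ≤ π) (hπ2 : π ≤ m + 1) (hd : m + 1 ≤ d) : Fin d ≃ Fin d where
  toFun x := ⟨bmap π m ((x : ℕ) + 1) - 1, by
    have h1 := bmap_pos (m := m) hπ1 (v := (x : ℕ) + 1) (by omega)
    have h2 := bmap_le (π := π) (m := m) hd (v := (x : ℕ) + 1) (by omega)
    omega⟩
  invFun y := ⟨bmap' π m ((y : ℕ) + 1) - 1, by
    have h1 := bmap'_pos (m := m) hπ1 (w := (y : ℕ) + 1) (by omega)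
    have h2 := bmap'_le hπ2 hd (w := (y : ℕ) + 1) (by omega)
    omega⟩
  left_inv x := by
    apply Fin.ext
    simp only
    have h1 := bmap_pos (m := m) hπ1 (v := (x : ℕ) + 1) (by omega)
    have h2 : bmap π m ((x : ℕ) + 1) - 1 + 1 = bmap π m ((x : ℕ) + 1) := by omega
    rw [h2, bmap'_bmap hπ2]
    omega
  right_inv y := by
    apply Fin.ext
    simp only
    have h1 := bmap'_pos (m := m) hπ1 (w := (y : ℕ) + 1) (by omega)
    have h2 : bmap' π m ((y : ℕ) + 1) - 1 + 1 = bmap' π m ((y : ℕ) + 1) := by omega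
    rw [h2, bmap_bmap' hπ2]
    omega

lemma eβ_val (d m π : ℕ) (hπ1 : 1 ≤ π) (hπ2 : π ≤ m + 1) (hd : m + 1 ≤ d) (x : Fin d) :
    ((eβ d m π hπ1 hπ2 hd x : Fin d) : ℕ) + 1 = bmap π m ((x : ℕ) + 1) := by
  have h1 := bmap_pos (m := m) hπ1 (v := (x : ℕ) + 1) (by omega)
  simp only [eβ, Equiv.coe_fn_mk]
  omega

lemma T1n (m k p v : ℕ) (hk : k ≤ m + 1) (hp : p < k) (hv : 1 ≤ v) :
    (v - 1 < k ∧ v ≠ p + 1) ↔ bmap (min (p + 1) (m + 1)) m v - 1 < k - 1 := by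
  unfold bmap; split_ifs <;> omega

lemma T2n (m k p v : ℕ) (hk : k ≤ m + 1) (hp : k ≤ p) (hv : 1 ≤ v) :
    (v - 1 < k) ↔ bmap (min (p + 1) (m + 1)) m v - 1 < k := by
  unfold bmap; split_ifs <;> omega

lemma cond_cons {d m k : ℕ} (p : Fin d) (w' : Fin m → Fin d) :
    (∀ j : Fin d, (j : ℕ) < k → ∃ i : Fin (m + 1), (Fin.cons p w' : Fin (m + 1) → Fin d) i = j) ↔
      (∀ j : Fin d, ((j : ℕ) < k ∧ j ≠ p) → ∃ i : Fin m, w' i = j) := by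
  constructor
  · rintro h j ⟨hj, hjp⟩
    obtain ⟨i, hi⟩ := h j hj
    rcases Fin.eq_zero_or_eq_succ i with rfl | ⟨i', rfl⟩
    · exact absurd (by simpa using hi) (Ne.symm hjp)
    · exact ⟨i', by simpa using hi⟩
  · intro h j hj
    by_cases hjp : j = p
    · exact ⟨0, by simp [hjp]⟩
    · obtain ⟨i, hi⟩ := h j ⟨hj, hjp⟩
      exact ⟨i.succ, by simpa using hi⟩

lemma transport_cond {d m : ℕ} (e : Fin d ≃ Fin d) (P Q : Fin d → Prop)
    (hPQ : ∀ x, P x ↔ Q (e x)) (w' : Fin m → Fin d) :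
    (∀ j, P j → ∃ i, w' i = j) ↔ (∀ j, Q j → ∃ i, e (w' i) = j) := by
  constructor
  · intro h j hQ
    obtain ⟨i, hi⟩ := h (e.symm j) ((hPQ _).mpr (by simpa using hQ))
    exact ⟨i, by rw [hi]; simp⟩
  · intro h j hP
    obtain ⟨i, hi⟩ := h (e j) ((hPQ j).mp hP)
    exact ⟨i, e.injective hi⟩

lemma u_cons {d m : ℕ} (hd : m + 1 ≤ d) (p : Fin d) (w' : Fin m → Fin d)
    (hπ1 : 1 ≤ min ((p : ℕ) + 1) (m + 1)) (hπ2 : min ((p : ℕ) + 1) (m + 1) ≤ m + 1) :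
    unlucky (m + 1) (List.ofFn fun i : Fin (m + 1) => ((Fin.cons p w' : Fin (m + 1) → Fin d) i : ℕ) + 1) =
      (if (p : ℕ) < m + 1 then 0 else 1) +
        unlucky m (List.ofFn fun i : Fin m =>
          ((eβ d m (min ((p : ℕ) + 1) (m + 1)) hπ1 hπ2 hd (w' i) : Fin d) : ℕ) + 1) := by
  rw [List.ofFn_succ]
  simp only [Fin.cons_zero, Fin.cons_succ]
  rw [unlucky_cons m ((p : ℕ) + 1) _ (by omega)
    (by intro v hv; simp only [List.mem_ofFn, Set.mem_range] at hv; obtain ⟨i, rfl⟩ := hv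
        exact Nat.le_add_left 1 _)]
  congr 1
  rw [List.map_ofFn]
  have : (bmap ((↑p + 1) ⊓ (m + 1)) m ∘ fun i : Fin m => ((w' i : ℕ) + 1)) =
      (fun i : Fin m => ((eβ d m ((↑p + 1) ⊓ (m + 1)) hπ1 hπ2 hd (w' i) : Fin d) : ℕ) + 1) := by
    funext i
    simp only [Function.comp_apply]
    rw [eβ_val]
  rw [this]


lemma inner_eq (d m k : ℕ) (hd : m + 1 ≤ d) (hk : k ≤ m + 1) (p : Fin d) :
    (∑ w' : Fin m → Fin d,
      if (∀ j : Fin d, (j : ℕ) < k → ∃ i : Fin (m + 1), (Fin.cons p w' : Fin (m + 1) → Fin d) i = j)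
      then (X : ℤ[X]) ^ unlucky (m + 1)
        (List.ofFn fun i : Fin (m + 1) => ((Fin.cons p w' : Fin (m + 1) → Fin d) i : ℕ) + 1)
      else 0)
    = if (p : ℕ) < k then Pc d m (k - 1)
      else if (p : ℕ) < m + 1 then Pc d m k else X * Pc d m k := by
  classical
  set π := min ((p : ℕ) + 1) (m + 1) with hπdef
  have hπ1 : 1 ≤ π := by omega
  have hπ2 : π ≤ m + 1 := min_le_right _ _
  set eb := eβ d m π hπ1 hπ2 hd with hebdef
  set k' := if (p : ℕ) < k then k - 1 else k with hk'def
  -- pointwise transport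
  have hPQ : ∀ x : Fin d, (((x : ℕ) < k ∧ x ≠ p) ↔ ((eb x : ℕ) < k')) := by
    intro x
    have hval : (eb x : ℕ) + 1 = bmap π m ((x : ℕ) + 1) := eβ_val d m π hπ1 hπ2 hd x
    have hne : (x ≠ p) ↔ ((x : ℕ) ≠ (p : ℕ)) := by
      constructor
      · intro h hc; exact h (Fin.ext hc)
      · intro h hc; exact h (congrArg Fin.val hc)
    by_cases hp : (p : ℕ) < k
    · rw [hk'def, if_pos hp]
      have := T1n m k (p : ℕ) ((x : ℕ) + 1) hk hp (by omega)
      rw [← hπdef] at this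
      rw [hne]
      constructor
      · rintro ⟨h1, h2⟩
        have := this.mp ⟨by omega, by omega⟩
        omega
      · intro h1
        have := this.mpr (by omega)
        exact ⟨by omega, by omega⟩
    · rw [hk'def, if_neg hp]
      have := T2n m k (p : ℕ) ((x : ℕ) + 1) hk (by omega) (by omega)
      rw [← hπdef] at this
      rw [hne]
      constructor
      · rintro ⟨h1, h2⟩
        have := this.mp (by omega)
        omega
      · intro h1
        have h2 := this.mpr (by omega)
        exact ⟨by omega, by omega⟩
  -- rewrite each summand
  have hsummand : ∀ w' : Fin m → Fin d,
      (if (∀ j : Fin d, (j : ℕ) < k → ∃ i : Fin (m + 1), (Fin.cons p w' : Fin (m + 1) → Fin d) i = j)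
       then (X : ℤ[X]) ^ unlucky (m + 1)
         (List.ofFn fun i : Fin (m + 1) => ((Fin.cons p w' : Fin (m + 1) → Fin d) i : ℕ) + 1)
       else 0)
      = (fun w'' : Fin m → Fin d =>
          if (∀ j : Fin d, (j : ℕ) < k' → ∃ i : Fin m, w'' i = j)
          then (X : ℤ[X]) ^ (if (p : ℕ) < m + 1 then 0 else 1) *
            X ^ unlucky m (List.ofFn fun i : Fin m => ((w'' i : ℕ) + 1))
          else 0) (fun i => eb (w' i)) := by
    intro w'
    simp only
    apply if_congr
    · rw [cond_cons]
      exact transport_cond eb (fun j => (j : ℕ) < k ∧ j ≠ p) (fun j => (j : ℕ) < k') hPQ w'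
    · rw [← pow_add]
      exact congrArg (X ^ ·) (u_cons hd p w' hπ1 hπ2)
    · rfl
  rw [Finset.sum_congr rfl (fun w' _ => hsummand w')]
  -- reindex
  have hre := Fintype.sum_equiv (Equiv.arrowCongr (Equiv.refl (Fin m)) eb)
    (fun w' : Fin m → Fin d =>
      (fun w'' : Fin m → Fin d =>
          if (∀ j : Fin d, (j : ℕ) < k' → ∃ i : Fin m, w'' i = j)
          then (X : ℤ[X]) ^ (if (p : ℕ) < m + 1 then 0 else 1) *
            X ^ unlucky m (List.ofFn fun i : Fin m => ((w'' i : ℕ) + 1))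
          else 0) (fun i => eb (w' i)))
    (fun w'' : Fin m → Fin d =>
          if (∀ j : Fin d, (j : ℕ) < k' → ∃ i : Fin m, w'' i = j)
          then (X : ℤ[X]) ^ (if (p : ℕ) < m + 1 then 0 else 1) *
            X ^ unlucky m (List.ofFn fun i : Fin m => ((w'' i : ℕ) + 1))
          else 0)
    (fun w' => rfl)
  rw [hre]
  -- pull out the constant factor
  have hfac : ∀ w'' : Fin m → Fin d,
      (if (∀ j : Fin d, (j : ℕ) < k' → ∃ i : Fin m, w'' i = j)
       then (X : ℤ[X]) ^ (if (p : ℕ) < m + 1 then 0 else 1) *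
         X ^ unlucky m (List.ofFn fun i : Fin m => ((w'' i : ℕ) + 1))
       else 0)
      = (X : ℤ[X]) ^ (if (p : ℕ) < m + 1 then 0 else 1) *
        (if (∀ j : Fin d, (j : ℕ) < k' → ∃ i : Fin m, w'' i = j)
         then (X : ℤ[X]) ^ unlucky m (List.ofFn fun i : Fin m => ((w'' i : ℕ) + 1))
         else 0) := by
    intro w''
    split_ifs <;> simp
  rw [Finset.sum_congr rfl (fun w'' _ => hfac w''), ← Finset.mul_sum]
  have hPc : (∑ w'' : Fin m → Fin d,
      (if (∀ j : Fin d, (j : ℕ) < k' → ∃ i : Fin m, w'' i = j)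
       then (X : ℤ[X]) ^ unlucky m (List.ofFn fun i : Fin m => ((w'' i : ℕ) + 1))
       else 0)) = Pc d m k' := by
    rw [Pc, Finset.sum_filter]
  rw [hPc]
  by_cases hp : (p : ℕ) < k
  · rw [if_pos hp, hk'def, if_pos hp, if_pos (by omega), pow_zero, one_mul]
  · rw [if_neg hp, hk'def, if_neg hp]
    by_cases hpm : (p : ℕ) < m + 1
    · rw [if_pos hpm, if_pos hpm, pow_zero, one_mul]
    · rw [if_neg hpm, if_neg hpm, pow_one]


lemma outer_sum (d m k : ℕ) (hd : m + 1 ≤ d) (hk : k ≤ m + 1) (A B : ℤ[X]) :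
    (∑ p : Fin d, (if (p : ℕ) < k then A else if (p : ℕ) < m + 1 then B else X * B))
      = C ((k : ℕ) : ℤ) * A + (C ((m + 1 - k : ℕ) : ℤ) + C ((d - (m + 1) : ℕ) : ℤ) * X) * B := by
  rw [Fin.sum_univ_eq_sum_range (fun p => if p < k then A else if p < m + 1 then B else X * B) d]
  rw [Finset.range_eq_Ico]
  rw [← Finset.sum_Ico_consecutive _ (Nat.zero_le (m + 1)) hd]
  rw [← Finset.sum_Ico_consecutive _ (Nat.zero_le k) hk]
  have h1 : (∑ p ∈ Finset.Ico 0 k, (if p < k then A else if p < m + 1 then B else X * B)) =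
      (k : ℕ) • A := by
    have hc : ∀ p ∈ Finset.Ico 0 k, (if p < k then A else if p < m + 1 then B else X * B) = A :=
      fun p hp => by rw [Finset.mem_Ico] at hp; rw [if_pos hp.2]
    rw [Finset.sum_congr rfl hc, Finset.sum_const, Nat.card_Ico, Nat.sub_zero]
  have h2 : (∑ p ∈ Finset.Ico k (m + 1), (if p < k then A else if p < m + 1 then B else X * B)) =
      (m + 1 - k : ℕ) • B := by
    have hc : ∀ p ∈ Finset.Ico k (m + 1), (if p < k then A else if p < m + 1 then B else X * B) = B :=
      fun p hp => by rw [Finset.mem_Ico] at hp; rw [if_neg (by omega), if_pos hp.2]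
    rw [Finset.sum_congr rfl hc, Finset.sum_const, Nat.card_Ico]
  have h3 : (∑ p ∈ Finset.Ico (m + 1) d, (if p < k then A else if p < m + 1 then B else X * B)) =
      (d - (m + 1) : ℕ) • (X * B) := by
    have hc : ∀ p ∈ Finset.Ico (m + 1) d, (if p < k then A else if p < m + 1 then B else X * B) = X * B :=
      fun p hp => by rw [Finset.mem_Ico] at hp; rw [if_neg (by omega), if_neg (by omega)]
    rw [Finset.sum_congr rfl hc, Finset.sum_const, Nat.card_Ico]
  rw [h1, h2, h3]
  rw [nsmul_eq_mul, nsmul_eq_mul, nsmul_eq_mul, ← C_eq_natCast, ← C_eq_natCast, ← C_eq_natCast]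
  ring

lemma Pc_rec (d m k : ℕ) (hd : m + 1 ≤ d) (hk : k ≤ m + 1) :
    Pc d (m + 1) k = C ((k : ℕ) : ℤ) * Pc d m (k - 1) +
      (C ((m + 1 - k : ℕ) : ℤ) + C ((d - (m + 1) : ℕ) : ℤ) * X) * Pc d m k := by
  classical
  have h0 : Pc d (m + 1) k = ∑ w : Fin (m + 1) → Fin d,
      (if (∀ j : Fin d, (j : ℕ) < k → ∃ i, w i = j)
       then (X : ℤ[X]) ^ unlucky (m + 1) (List.ofFn fun i => ((w i : ℕ) + 1)) else 0) := by
    rw [Pc, Finset.sum_filter]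
  rw [h0]
  have e := Fin.consEquiv (fun _ : Fin (m + 1) => Fin d)
  rw [← Fintype.sum_equiv (Fin.consEquiv (fun _ : Fin (m + 1) => Fin d))
    (fun x : Fin d × (Fin m → Fin d) =>
      (if (∀ j : Fin d, (j : ℕ) < k → ∃ i, (Fin.cons x.1 x.2 : Fin (m + 1) → Fin d) i = j)
       then (X : ℤ[X]) ^ unlucky (m + 1)
         (List.ofFn fun i => (((Fin.cons x.1 x.2 : Fin (m + 1) → Fin d) i : ℕ) + 1)) else 0))
    _ (fun x => rfl)]
  rw [Fintype.sum_prod_type]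
  rw [Finset.sum_congr rfl (fun p _ => inner_eq d m k hd hk p)]
  exact outer_sum d m k hd hk (Pc d m (k - 1)) (Pc d m k)


lemma main (d : ℕ) (hd0 : 0 < d) :
    ∀ m, m ≤ d → ∀ k, k ≤ d → L d m k = Pc d m k := by
  intro m
  induction m with
  | zero =>
    intro _ k _
    rw [L_zero, Pc_zero d k hd0]
  | succ m ih =>
    intro hm k hkd
    have ihm := ih (by omega)
    rcases Nat.eq_zero_or_pos k with rfl | hk0
    · rw [L_rec0 d m, ihm 0 (by omega), Pc_rec d m 0 hm (Nat.zero_le _)]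
      have e2 : ((d - (m + 1) : ℕ) : ℤ) = ((d : ℕ) : ℤ) - ((m + 1 : ℕ) : ℤ) := Nat.cast_sub hm
      have e1 : ((m + 1 - 0 : ℕ) : ℤ) = ((m : ℕ) : ℤ) + 1 := by norm_num
      rw [e1, e2]
      simp only [Nat.cast_zero, map_zero, zero_mul, zero_add]
      ring
    · obtain ⟨k', rfl⟩ : ∃ k', k = k' + 1 := ⟨k - 1, by omega⟩
      by_cases hk : k' + 1 ≤ m + 1
      · rw [L_rec d m k', ihm k' (by omega), ihm (k' + 1) hkd,
          Pc_rec d m (k' + 1) hm hk]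
        have e2 : ((d - (m + 1) : ℕ) : ℤ) = ((d : ℕ) : ℤ) - ((m + 1 : ℕ) : ℤ) := Nat.cast_sub hm
        have e3 : ((m + 1 - (k' + 1) : ℕ) : ℤ) = ((m : ℕ) : ℤ) - ((k' : ℕ) : ℤ) := by
          rw [Nat.cast_sub hk]; push_cast; ring
        have e4 : (((k' + 1 : ℕ)) : ℤ) = ((k' : ℕ) : ℤ) + 1 := by push_cast; ring
        rw [e2, e3, e4, Nat.succ_sub_one]
        ring
      · rw [L_rec d m k', ihm k' (by omega), ihm (k' + 1) hkd,
          Pc_big d m k' (by omega) (by omega), Pc_big d m (k' + 1) (by omega) hkd,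
          Pc_big d (m + 1) (k' + 1) (by omega) hkd]
        ring

end Stmt16

theorem stmt_16 (n d k : ℕ) (hn : 0 < n) (hd : n ≤ d) (hk : k ≤ n) :
    (∑ j ∈ Finset.range (k + 1),
        (-1) ^ j * C ((k.choose j : ℤ)) *
          ∏ i ∈ Finset.range n, (C ((d : ℤ) - n + i) * X + C ((n : ℤ) - j - i)) : ℤ[X]) =
      (∑ w ∈ Finset.univ.filter
          (fun w : Fin n → Fin d => ∀ j : Fin d, (j : ℕ) < k → ∃ i, w i = j),
        X ^ unlucky n (List.ofFn fun i => (w i : ℕ) + 1)) ∧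
    ∀ i : ℕ, 0 ≤ (∑ j ∈ Finset.range (k + 1),
        (-1) ^ j * C ((k.choose j : ℤ)) *
          ∏ i ∈ Finset.range n, (C ((d : ℤ) - n + i) * X + C ((n : ℤ) - j - i)) : ℤ[X]).coeff i := by
  have key : (∑ j ∈ Finset.range (k + 1),
        (-1) ^ j * C ((k.choose j : ℤ)) *
          ∏ i ∈ Finset.range n, (C ((d : ℤ) - n + i) * X + C ((n : ℤ) - j - i)) : ℤ[X]) =
      (∑ w ∈ Finset.univ.filter
          (fun w : Fin n → Fin d => ∀ j : Fin d, (j : ℕ) < k → ∃ i, w i = j),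
        X ^ unlucky n (List.ofFn fun i => (w i : ℕ) + 1)) :=
    Stmt16.main d (by omega) n hd k (by omega)
  refine ⟨key, ?_⟩
  intro i
  rw [key, Polynomial.finset_sum_coeff]
  apply Finset.sum_nonneg
  intro w _
  rw [Polynomial.coeff_X_pow]
  split_ifs <;> norm_num
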